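/- For any f with ‖f‖_ω < ∞ there exists c₀ ∈ ℝ such that sup_x (f(x)+c₀)/(1+ω(x)) = −inf_x (f(x)+c₀)/(1+ω(x)) = ‖f‖_{ω-span}. -/

import Mathlib

open Set

noncomputable def wspan {k : ℕ} (ω f : (Fin k → ℝ) → ℝ) : ℝ :=
  ⨆ p : (Fin k → ℝ) × (Fin k → ℝ), (f p.1 - f p.2) / (2 + ω p.1 + ω p.2)

theorem stmt5 (k : ℕ) (ω : (Fin k → ℝ) → ℝ) (hωc : Continuous ω)
    (hω0 : ∀ x, 0 ≤ ω x)
    (f : (Fin k → ℝ) → ℝ) (hfc : Continuous f)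
    (hf : BddAbove (Set.range fun x => |f x| / (1 + ω x))) :
    ∃ c₀ : ℝ,
      (⨆ x, (f x + c₀) / (1 + ω x)) = wspan ω f ∧
      (-(⨅ x, (f x + c₀) / (1 + ω x))) = wspan ω f := by
  have hne : Nonempty (Fin k → ℝ) := ⟨fun _ => 0⟩
  have hupos : ∀ x : Fin k → ℝ, (0:ℝ) < 1 + ω x := fun x => by linarith [hω0 x]
  obtain ⟨B', hB'⟩ := hf
  set B : ℝ := max B' 0 with hBdef
  have hB0 : (0:ℝ) ≤ B := le_max_right _ _
  have hB : ∀ x, |f x| ≤ B * (1 + ω x) := by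
    intro x
    have h1 : |f x| / (1 + ω x) ≤ B := le_trans (hB' ⟨x, rfl⟩) (le_max_left _ _)
    calc |f x| = |f x| / (1 + ω x) * (1 + ω x) := (div_mul_cancel₀ _ (hupos x).ne').symm
      _ ≤ B * (1 + ω x) := mul_le_mul_of_nonneg_right h1 (hupos x).le
  have hfub : ∀ x, f x ≤ B * (1 + ω x) := fun x => (le_abs_self _).trans (hB x)
  have hflb : ∀ x, -(B * (1 + ω x)) ≤ f x := fun x => by
    have h := hB x; have := neg_abs_le (f x); linarith
  -- pointwise bounds on g c x = (f x + c)/(1+ω x)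
  have hgub : ∀ (c : ℝ) (x), (f x + c) / (1 + ω x) ≤ B + |c| := by
    intro c x
    rw [div_le_iff₀ (hupos x)]
    nlinarith [hfub x, le_abs_self c, abs_nonneg c, hω0 x]
  have hglb : ∀ (c : ℝ) (x), -(B + |c|) ≤ (f x + c) / (1 + ω x) := by
    intro c x
    rw [le_div_iff₀ (hupos x)]
    nlinarith [hflb x, neg_abs_le c, abs_nonneg c, hω0 x]
  have bddA : ∀ c : ℝ, BddAbove (range fun x => (f x + c) / (1 + ω x)) :=
    fun c => ⟨B + |c|, by rintro y ⟨x, rfl⟩; exact hgub c x⟩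
  have bddB : ∀ c : ℝ, BddBelow (range fun x => (f x + c) / (1 + ω x)) :=
    fun c => ⟨-(B + |c|), by rintro y ⟨x, rfl⟩; exact hglb c x⟩
  have hSle : ∀ (c : ℝ) (x), (f x + c) / (1 + ω x) ≤ ⨆ y, (f y + c) / (1 + ω y) :=
    fun c x => le_ciSup (bddA c) x
  have hIle : ∀ (c : ℝ) (x), (⨅ y, (f y + c) / (1 + ω y)) ≤ (f x + c) / (1 + ω x) :=
    fun c x => ciInf_le (bddB c) x
  -- Lipschitz estimates
  have gdiff : ∀ (a b : ℝ) (x), (f x + a) / (1 + ω x) ≤ (f x + b) / (1 + ω x) + |a - b| := by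
    intro a b x
    have h : (f x + b) / (1 + ω x) + |a - b| = (f x + b + |a - b| * (1 + ω x)) / (1 + ω x) :=
      div_add' _ _ _ (hupos x).ne' 
    rw [h, div_le_div_iff_of_pos_right (hupos x)]
    nlinarith [le_abs_self (a - b), abs_nonneg (a - b), hω0 x]
  have Slip : ∀ a b : ℝ, (⨆ x, (f x + a) / (1 + ω x)) ≤ (⨆ x, (f x + b) / (1 + ω x)) + |a - b| :=
    fun a b => ciSup_le fun x => (gdiff a b x).trans (add_le_add_left (hSle b x) _)
  have Ilip : ∀ a b : ℝ, (⨅ x, (f x + a) / (1 + ω x)) ≤ (⨅ x, (f x + b) / (1 + ω x)) + |a - b| := by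
    intro a b
    have h : (⨅ x, (f x + a) / (1 + ω x)) - |a - b| ≤ ⨅ x, (f x + b) / (1 + ω x) :=
      le_ciInf fun x => by
        have h1 := gdiff a b x
        have h2 := hIle a x
        linarith
    linarith
  -- continuity of φ c = S c + I c
  set φ : ℝ → ℝ := fun c =>
    (⨆ x, (f x + c) / (1 + ω x)) + ⨅ x, (f x + c) / (1 + ω x) with hφdef
  have hφc : Continuous φ := by
    refine (LipschitzWith.of_dist_le_mul (K := 2) ?_).continuous
    intro a b
    rw [Real.dist_eq, Real.dist_eq, abs_le]
    have h1 := Slip a b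
    have h2 := Slip b a
    have h3 := Ilip a b
    have h4 := Ilip b a
    have habs : |b - a| = |a - b| := abs_sub_comm _ _
    have hK : ((2 : NNReal) : ℝ) = 2 := by norm_num
    rw [hK]
    constructor <;> simp only [hφdef] <;> linarith
  -- sign change
  set x₀ : Fin k → ℝ := fun _ => 0 with hx₀
  set C : ℝ := 2 * B * (1 + ω x₀) with hCdef
  have hC0 : 0 ≤ C := mul_nonneg (by linarith) (hupos x₀).le
  have hφpos : 0 ≤ φ C := by
    have hI : -B ≤ ⨅ x, (f x + C) / (1 + ω x) := le_ciInf fun x => by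
      rw [le_div_iff₀ (hupos x)]
      nlinarith [hflb x, hω0 x]
    have hS : B ≤ ⨆ x, (f x + C) / (1 + ω x) := by
      refine le_trans ?_ (hSle C x₀)
      rw [le_div_iff₀ (hupos x₀)]
      nlinarith [hflb x₀, hω0 x₀]
    simp only [hφdef]
    linarith
  have hφneg : φ (-C) ≤ 0 := by
    have hS : (⨆ x, (f x + -C) / (1 + ω x)) ≤ B := ciSup_le fun x => by
      rw [div_le_iff₀ (hupos x)]
      nlinarith [hfub x, hω0 x]
    have hI : (⨅ x, (f x + -C) / (1 + ω x)) ≤ -B := by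
      refine le_trans (hIle (-C) x₀) ?_
      rw [div_le_iff₀ (hupos x₀)]
      nlinarith [hfub x₀, hω0 x₀]
    simp only [hφdef]
    linarith
  have hCC : -C ≤ C := by linarith
  have h0mem : (0:ℝ) ∈ Icc (φ (-C)) (φ C) := ⟨hφneg, hφpos⟩
  obtain ⟨c₀, -, hc₀⟩ := intermediate_value_Icc hCC hφc.continuousOn h0mem
  have hIS : (⨅ x, (f x + c₀) / (1 + ω x)) = -(⨆ x, (f x + c₀) / (1 + ω x)) := by
      have : φ c₀ = 0 := hc₀
      simp only [hφdef] at this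
      linarith
  set t : ℝ := ⨆ x, (f x + c₀) / (1 + ω x) with ht
  -- denominator positivity for pairs
  have hden : ∀ p : (Fin k → ℝ) × (Fin k → ℝ), (0:ℝ) < 2 + ω p.1 + ω p.2 :=
    fun p => by linarith [hω0 p.1, hω0 p.2]
  -- pointwise bound: each pair term ≤ t
  have hpair : ∀ p : (Fin k → ℝ) × (Fin k → ℝ),
      (f p.1 - f p.2) / (2 + ω p.1 + ω p.2) ≤ t := by
    intro p
    have h1 : (f p.1 + c₀) / (1 + ω p.1) ≤ t := hSle c₀ p.1
    have h2 : -t ≤ (f p.2 + c₀) / (1 + ω p.2) := by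
      rw [← hIS] at *
      have := hIle c₀ p.2
      linarith [hIle c₀ p.2]
    rw [div_le_iff₀ (hupos p.1)] at h1
    rw [le_div_iff₀ (hupos p.2)] at h2
    rw [div_le_iff₀ (hden p)]
    nlinarith
  have bddP : BddAbove (range fun p : (Fin k → ℝ) × (Fin k → ℝ) =>
      (f p.1 - f p.2) / (2 + ω p.1 + ω p.2)) :=
    ⟨t, by rintro y ⟨p, rfl⟩; exact hpair p⟩
  have hle1 : wspan ω f ≤ t := ciSup_le hpair
  have hle2 : t ≤ wspan ω f := by
    refine le_of_forall_pos_le_add fun ε hε => ?_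
    obtain ⟨x, hx⟩ := exists_lt_of_lt_ciSup (show t - ε/2 < t by linarith)
    have hy' : (⨅ y, (f y + c₀) / (1 + ω y)) < -t + ε/2 := by
      rw [hIS]; linarith
    obtain ⟨y, hy⟩ := exists_lt_of_ciInf_lt hy'
    have hx' : (t - ε/2) * (1 + ω x) < f x + c₀ := by
      rw [← lt_div_iff₀ (hupos x)]; exact hx
    have hy'' : f y + c₀ < (-t + ε/2) * (1 + ω y) := by
      rw [← div_lt_iff₀ (hupos y)]; exact hy
    have hterm : t - ε ≤ (f x - f y) / (2 + ω x + ω y) := by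
      rw [le_div_iff₀ (hden (x, y))]
      nlinarith [hω0 x, hω0 y, hε]
    have : (f x - f y) / (2 + ω x + ω y) ≤ wspan ω f := le_ciSup bddP (x, y)
    linarith
  have hmain : t = wspan ω f := le_antisymm hle2 hle1
  exact ⟨c₀, by rw [← ht]; exact hmain, by rw [hIS, neg_neg]; exact hmain⟩
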